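/- arXiv:2012.13471 — 7 statements merged into one kernel-verified Lean document; each statement's English description precedes it below -/
import Mathlib

section
/- Let r, s be coprime integers with 0 ≤ s < r and let m be a positive rational number. A positive integer n belongs to N_{θ,m} if and only if there exist rational numbers x, y, z with y ≠ 0 such that y² = x·(x + 2n(r+s)/(m+1))·(x − 2n(r−s)/(m+1)) and z² = x⁴ + b₁x³ + b₂x² + b₃x + b₄, where b₁ = 8ns, b₂ = 8n²(2m²r² + 4s²m + 3s² − r²)/(m+1)², b₃ = −32n³s(r²−s²)/(m+1)², and b₄ = 16n⁴(r²−s²)²/(m+1)⁴. -/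
/-- A θ-parallelogram envelope for `n`, where `cos θ = s/r`. -/
def IsEnvelope (r s : ℤ) (n : ℕ) (a b c d e : ℚ) : Prop :=
  0 < a ∧ 0 < b ∧ 0 < c ∧ 0 < d ∧ 0 < e ∧
  a ^ 2 + b ^ 2 - (2 * (s : ℚ) / (r : ℚ)) * a * b = c ^ 2 ∧
  a ^ 2 + d ^ 2 + (2 * (s : ℚ) / (r : ℚ)) * a * d = e ^ 2 ∧
  a * (b + d) = (r : ℚ) * (n : ℚ)

set_option maxHeartbeats 1600000 in
theorem stmt_4 (r s : ℤ) (hrs : IsCoprime r s) (hs : 0 ≤ s) (hsr : s < r)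
    (m : ℚ) (hm : 0 < m) (n : ℕ) (hn : 0 < n) :
    (∃ a b c d e : ℚ, IsEnvelope r s n a b c d e ∧ d = m * b) ↔
    ∃ x y z : ℚ, y ≠ 0 ∧
      y ^ 2 = x * (x + 2 * (n : ℚ) * ((r : ℚ) + (s : ℚ)) / (m + 1)) *
        (x - 2 * (n : ℚ) * ((r : ℚ) - (s : ℚ)) / (m + 1)) ∧
      z ^ 2 = x ^ 4 + (8 * (n : ℚ) * (s : ℚ)) * x ^ 3 +
        (8 * (n : ℚ) ^ 2 * (2 * m ^ 2 * (r : ℚ) ^ 2 + 4 * (s : ℚ) ^ 2 * m +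
          3 * (s : ℚ) ^ 2 - (r : ℚ) ^ 2) / (m + 1) ^ 2) * x ^ 2 +
        (-(32 * (n : ℚ) ^ 3 * (s : ℚ) * ((r : ℚ) ^ 2 - (s : ℚ) ^ 2)) / (m + 1) ^ 2) * x +
        16 * (n : ℚ) ^ 4 * ((r : ℚ) ^ 2 - (s : ℚ) ^ 2) ^ 2 / (m + 1) ^ 4 := by
  have hr0 : (0:ℤ) < r := lt_of_le_of_lt hs hsr
  have hrQ : (0:ℚ) < (r:ℚ) := by exact_mod_cast hr0
  have hrne : (r:ℚ) ≠ 0 := ne_of_gt hrQ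
  have hsQ : (0:ℚ) ≤ (s:ℚ) := by exact_mod_cast hs
  have hsrQ : (s:ℚ) < (r:ℚ) := by exact_mod_cast hsr
  have hm1 : (0:ℚ) < m + 1 := by linarith
  have hm1' : m + 1 ≠ 0 := ne_of_gt hm1
  have hnQ : (0:ℚ) < (n:ℚ) := by exact_mod_cast hn
  constructor
  · rintro ⟨a, b, c, d, e, ⟨ha, hb, hc, hd, he, h1, h2, h3⟩, hdm⟩
    subst hdm
    have hn' : (n:ℚ) = a*b*(m+1)/(r:ℚ) := by
      field_simp
      linear_combination -h3
    have hfac : (a + c - (s:ℚ)/(r:ℚ)*b) * (c - a + (s:ℚ)/(r:ℚ)*b)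
        = b^2*(1-((s:ℚ)/(r:ℚ))^2) := by linear_combination -h1
    have hk1 : (s:ℚ)/(r:ℚ) < 1 := (div_lt_one hrQ).2 hsrQ
    have hk0 : 0 ≤ (s:ℚ)/(r:ℚ) := div_nonneg hsQ hrQ.le
    have hk2 : ((s:ℚ)/(r:ℚ))^2 < 1 := by nlinarith only [hk0, hk1]
    have hpos2 : 0 < b^2*(1-((s:ℚ)/(r:ℚ))^2) :=
      mul_pos (pow_pos hb 2) (by nlinarith only [hk2])
    have hposX : 0 < a + c - (s:ℚ)/(r:ℚ)*b := by
      nlinarith only [hfac, hpos2, hc]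
    have hX2 : 0 < a * (a + c - (s:ℚ)/(r:ℚ)*b) := mul_pos ha hposX
    have hX : (0:ℚ) < 2*a*(a+c) - 2*(s:ℚ)/(r:ℚ)*a*b := by
      have hXe : 2*a*(a+c) - 2*(s:ℚ)/(r:ℚ)*a*b = 2*(a*(a+c-(s:ℚ)/(r:ℚ)*b)) := by ring
      rw [hXe]; linarith [hX2]
    refine ⟨2*a*(a+c) - 2*(s:ℚ)/(r:ℚ)*a*b,
            2*a*(2*a*(a+c) - 2*(s:ℚ)/(r:ℚ)*a*b),
            4*a*e*(2*a*(a+c) - 2*(s:ℚ)/(r:ℚ)*a*b), ?_, ?_, ?_⟩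
    · exact (mul_pos (by linarith : (0:ℚ) < 2*a) hX).ne'
    · have eA : 2*(n:ℚ)*((r:ℚ)+(s:ℚ))/(m+1) = 2*a*b + 2*(s:ℚ)/(r:ℚ)*a*b := by
        rw [hn']; field_simp
      have eB : 2*(n:ℚ)*((r:ℚ)-(s:ℚ))/(m+1) = 2*a*b - 2*(s:ℚ)/(r:ℚ)*a*b := by
        rw [hn']; field_simp
      rw [eA, eB]
      linear_combination (4*a^2*(2*a*(a+c) - 2*(s:ℚ)/(r:ℚ)*a*b)) * h1
    · have eC1 : 8*(n:ℚ)*(s:ℚ) = 8*((s:ℚ)/(r:ℚ))*(m+1)*(a*b) := by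
        rw [hn']; field_simp
      have eC2 : 8*(n:ℚ)^2*(2*m^2*(r:ℚ)^2 + 4*(s:ℚ)^2*m + 3*(s:ℚ)^2 - (r:ℚ)^2)/(m+1)^2
          = 8*(a*b)^2*(2*m^2 + 4*((s:ℚ)/(r:ℚ))^2*m + 3*((s:ℚ)/(r:ℚ))^2 - 1) := by
        rw [hn']; field_simp
      have eC3 : -(32*(n:ℚ)^3*(s:ℚ)*((r:ℚ)^2 - (s:ℚ)^2))/(m+1)^2
          = -(32*((s:ℚ)/(r:ℚ))*(1-((s:ℚ)/(r:ℚ))^2)*(m+1)*(a*b)^3) := by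
        rw [hn']; field_simp
      have eC4 : 16*(n:ℚ)^4*((r:ℚ)^2-(s:ℚ)^2)^2/(m+1)^4
          = 16*(a*b)^4*(1-((s:ℚ)/(r:ℚ))^2)^2 := by
        rw [hn']; field_simp
      rw [eC1, eC2, eC3, eC4]
      linear_combination
        (4*a^2*((2*a*(a+c) - 2*(s:ℚ)/(r:ℚ)*a*b)^2
          + (4*((s:ℚ)/(r:ℚ))*(a*b)*(2*m+1)+4*a^2)*(2*a*(a+c) - 2*(s:ℚ)/(r:ℚ)*a*b)
          - 4*a^2*b^2*(1-((s:ℚ)/(r:ℚ))^2))) * h1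
        - (16*a^2*(2*a*(a+c) - 2*(s:ℚ)/(r:ℚ)*a*b)^2) * h2
  · rintro ⟨x, y, z, hy, h1, h2⟩
    have hx : x ≠ 0 := by
      rintro rfl
      simp only [zero_mul] at h1
      exact hy (by simpa [pow_eq_zero_iff] using h1)
    have h2x : (2:ℚ)*x ≠ 0 := by
      exact mul_ne_zero two_ne_zero hx
    obtain ⟨a, hA⟩ : ∃ a : ℚ, a = |y/(2*x)| := ⟨_, rfl⟩
    have ha : 0 < a := by rw [hA]; exact abs_pos.2 (div_ne_zero hy h2x)
    have ha2 : 4*x^2*a^2 = y^2 := by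
      rw [hA, sq_abs]; field_simp <;> ring
    obtain ⟨b, hB⟩ : ∃ b : ℚ, b = (r:ℚ)*(n:ℚ)/((m+1)*a) := ⟨_, rfl⟩
    have hb : 0 < b := by rw [hB]; exact div_pos (mul_pos hrQ hnQ) (mul_pos hm1 ha)
    have hab : a*b*(m+1) = (r:ℚ)*(n:ℚ) := by
      rw [hB]; field_simp <;> ring
    obtain ⟨c0, hC0⟩ : ∃ c0 : ℚ, c0 = x/(2*a) - a + (s:ℚ)*b/(r:ℚ) := ⟨_, rfl⟩
    have hc0 : 2*a*(r:ℚ)*c0 = (r:ℚ)*x - 2*(r:ℚ)*a^2 + 2*(s:ℚ)*a*b := by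
      rw [hC0]; field_simp <;> ring
    obtain ⟨e0, hE0⟩ : ∃ e0 : ℚ, e0 = z/(4*a*x) := ⟨_, rfl⟩
    have he0 : 4*a*x*e0 = z := by
      rw [hE0]; field_simp <;> ring
    have h1' : y^2*(m+1)^2
        = x*((m+1)*x + 2*(n:ℚ)*((r:ℚ)+(s:ℚ)))*((m+1)*x - 2*(n:ℚ)*((r:ℚ)-(s:ℚ))) := by
      field_simp at h1
      linear_combination h1
    have h2' : z^2*(m+1)^4
        = (m+1)^4*x^4 + 8*(n:ℚ)*(s:ℚ)*(m+1)^4*x^3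
          + 8*(n:ℚ)^2*(m+1)^2*(2*m^2*(r:ℚ)^2+4*(s:ℚ)^2*m+3*(s:ℚ)^2-(r:ℚ)^2)*x^2
          - 32*(n:ℚ)^3*(s:ℚ)*((r:ℚ)^2-(s:ℚ)^2)*(m+1)^2*x
          + 16*(n:ℚ)^4*((r:ℚ)^2-(s:ℚ)^2)^2 := by
      refine mul_right_cancel₀ (pow_ne_zero 2 hm1') ?_
      field_simp at h2
      linear_combination (m+1)^2 * h2
    have H1 : y^2*(r:ℚ)^2*(m+1)^2
        = (x*(x*(r:ℚ)+2*(a*b)*((r:ℚ)+(s:ℚ)))*(x*(r:ℚ)-2*(a*b)*((r:ℚ)-(s:ℚ))))*(m+1)^2 := by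
      linear_combination (r:ℚ)^2 * h1'
        + (-(4*(s:ℚ)*(r:ℚ)*(m+1)*x^2) + 4*((r:ℚ)^2-(s:ℚ)^2)*x*((n:ℚ)*(r:ℚ)+a*b*(m+1))) * hab
    have H1' : y^2*(r:ℚ)^2
        = x*(x*(r:ℚ)+2*(a*b)*((r:ℚ)+(s:ℚ)))*(x*(r:ℚ)-2*(a*b)*((r:ℚ)-(s:ℚ))) :=
      mul_right_cancel₀ (pow_ne_zero 2 hm1') H1
    have H2 : z^2*(r:ℚ)^4*(m+1)^4
        = ((r:ℚ)^4*x^4 + 8*(a*b)*(m+1)*(s:ℚ)*(r:ℚ)^3*x^3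
          + 8*(a*b)^2*(2*m^2*(r:ℚ)^2+4*(s:ℚ)^2*m+3*(s:ℚ)^2-(r:ℚ)^2)*(r:ℚ)^2*x^2
          - 32*(a*b)^3*(m+1)*(s:ℚ)*((r:ℚ)^2-(s:ℚ)^2)*(r:ℚ)*x
          + 16*(a*b)^4*((r:ℚ)^2-(s:ℚ)^2)^2)*(m+1)^4 := by
      linear_combination (r:ℚ)^4 * h2'
        + (-(8*(s:ℚ)*(r:ℚ)^3*(m+1)^4*x^3)
          - 8*(2*m^2*(r:ℚ)^2+4*(s:ℚ)^2*m+3*(s:ℚ)^2-(r:ℚ)^2)*(r:ℚ)^2*(m+1)^2*((n:ℚ)*(r:ℚ)+a*b*(m+1))*x^2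
          + 32*(s:ℚ)*((r:ℚ)^2-(s:ℚ)^2)*(m+1)^2*(r:ℚ)*((n:ℚ)^2*(r:ℚ)^2+(n:ℚ)*(r:ℚ)*a*b*(m+1)+a^2*b^2*(m+1)^2)*x
          - 16*((r:ℚ)^2-(s:ℚ)^2)^2*((n:ℚ)*(r:ℚ)+a*b*(m+1))*((n:ℚ)^2*(r:ℚ)^2+a^2*b^2*(m+1)^2)) * hab
    have H2' : z^2*(r:ℚ)^4
        = (r:ℚ)^4*x^4 + 8*(a*b)*(m+1)*(s:ℚ)*(r:ℚ)^3*x^3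
          + 8*(a*b)^2*(2*m^2*(r:ℚ)^2+4*(s:ℚ)^2*m+3*(s:ℚ)^2-(r:ℚ)^2)*(r:ℚ)^2*x^2
          - 32*(a*b)^3*(m+1)*(s:ℚ)*((r:ℚ)^2-(s:ℚ)^2)*(r:ℚ)*x
          + 16*(a*b)^4*((r:ℚ)^2-(s:ℚ)^2)^2 :=
      mul_right_cancel₀ (pow_ne_zero 4 hm1') H2
    have P1 : (c0^2*(r:ℚ))*(4*a^2*(r:ℚ)*x)
        = (a^2*(r:ℚ) + b^2*(r:ℚ) - 2*(s:ℚ)*a*b)*(4*a^2*(r:ℚ)*x) := by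
      linear_combination (x*(2*a*(r:ℚ)*c0 + (r:ℚ)*x - 2*(r:ℚ)*a^2 + 2*(s:ℚ)*a*b))*hc0
        - H1' - (r:ℚ)^2*ha2
    have hM1ne : (4*a^2*(r:ℚ)*x) ≠ 0 := by
      apply mul_ne_zero (mul_ne_zero (by positivity) hrne) hx
    have P1' : c0^2*(r:ℚ) = a^2*(r:ℚ) + b^2*(r:ℚ) - 2*(s:ℚ)*a*b :=
      mul_right_cancel₀ hM1ne P1
    have P2 : (e0^2*(r:ℚ))*(16*a^2*x^3*(r:ℚ)^5)
        = (a^2*(r:ℚ) + m^2*b^2*(r:ℚ) + 2*(s:ℚ)*m*a*b)*(16*a^2*x^3*(r:ℚ)^5) := by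
      linear_combination (x*(r:ℚ)^6*(4*a*x*e0 + z))*he0 + (x*(r:ℚ)^2)*H2'
        - (x^2*(r:ℚ)^4 + 4*a*b*x*(r:ℚ)^3*(s:ℚ) + 8*a*b*m*x*(r:ℚ)^3*(s:ℚ)
            + 4*a^2*x*(r:ℚ)^4 + 4*a^2*b^2*(r:ℚ)^2*(s:ℚ)^2 - 4*a^2*b^2*(r:ℚ)^4)*H1'
        - ((r:ℚ)^2*(x^2*(r:ℚ)^4 + 4*a*b*x*(r:ℚ)^3*(s:ℚ) + 8*a*b*m*x*(r:ℚ)^3*(s:ℚ)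
            + 4*a^2*x*(r:ℚ)^4 + 4*a^2*b^2*(r:ℚ)^2*(s:ℚ)^2 - 4*a^2*b^2*(r:ℚ)^4))*ha2
    have hM2ne : (16*a^2*x^3*(r:ℚ)^5) ≠ 0 := by
      apply mul_ne_zero (mul_ne_zero (by positivity) (pow_ne_zero 3 hx)) (pow_ne_zero 5 hrne)
    have P2' : e0^2*(r:ℚ) = a^2*(r:ℚ) + m^2*b^2*(r:ℚ) + 2*(s:ℚ)*m*a*b :=
      mul_right_cancel₀ hM2ne P2
    have hc0ne : c0 ≠ 0 := by
      intro h0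
      rw [h0] at P1'
      have u1 : 0 ≤ (a-b)^2*(r:ℚ) := mul_nonneg (sq_nonneg _) hrQ.le
      have u2 : 0 < a*b*((r:ℚ)-(s:ℚ)) :=
        mul_pos (mul_pos ha hb) (by linarith : (0:ℚ) < (r:ℚ)-(s:ℚ))
      nlinarith only [P1', u1, u2]
    have he0ne : e0 ≠ 0 := by
      intro h0
      rw [h0] at P2'
      have t1 : 0 < a^2*(r:ℚ) := by positivity
      have t2 : 0 < m^2*b^2*(r:ℚ) := by positivity
      have t3 : 0 ≤ 2*(s:ℚ)*m*a*b := by positivity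
      nlinarith only [P2', t1, t2, t3]
    refine ⟨a, b, |c0|, m*b, |e0|,
      ⟨ha, hb, abs_pos.2 hc0ne, mul_pos hm hb, abs_pos.2 he0ne, ?_, ?_, ?_⟩, rfl⟩
    · rw [sq_abs]
      field_simp
      linear_combination -P1'
    · rw [sq_abs]
      field_simp
      linear_combination -P2'
    · linear_combination hab
end

section
/- Let r, s be coprime integers with 0 ≤ s < r and let m be a positive rational number with not (s = 0 and m = 1). Then T = (m(r²−s²), r(r²−s²)m(m+1)) is a rational point on G_θ^m of exact additive order 4 in the group G_θ^m(ℚ), and likewise −T has order 4. -/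
/-- The elliptic curve `G_θ^m : Y² = X³ + (r²m² + 2s²m + r²)X² + m²(r²−s²)²X`. -/
noncomputable def Gcurve (r s : ℤ) (m : ℚ) : WeierstrassCurve.Affine ℚ :=
  { a₁ := 0
    a₂ := (r : ℚ) ^ 2 * m ^ 2 + 2 * (s : ℚ) ^ 2 * m + (r : ℚ) ^ 2
    a₃ := 0
    a₄ := m ^ 2 * ((r : ℚ) ^ 2 - (s : ℚ) ^ 2) ^ 2
    a₆ := 0 }

theorem stmt_6 (r s : ℤ) (hrs : IsCoprime r s) (hs : 0 ≤ s) (hsr : s < r)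
    (m : ℚ) (hm : 0 < m) (hnd : ¬(s = 0 ∧ m = 1)) :
    ∃ h : (Gcurve r s m).Nonsingular (m * ((r : ℚ) ^ 2 - (s : ℚ) ^ 2))
        ((r : ℚ) * ((r : ℚ) ^ 2 - (s : ℚ) ^ 2) * m * (m + 1)),
      addOrderOf (WeierstrassCurve.Affine.Point.some (h := h)) = 4 ∧
      addOrderOf (-WeierstrassCurve.Affine.Point.some (h := h)) = 4 := by
  have hsQ : (0 : ℚ) ≤ (s : ℚ) := by exact_mod_cast hs
  have hsrQ : (s : ℚ) < (r : ℚ) := by exact_mod_cast hsr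
  have hrQ : (0 : ℚ) < (r : ℚ) := lt_of_le_of_lt hsQ hsrQ
  have hD : (0 : ℚ) < (r : ℚ) ^ 2 - (s : ℚ) ^ 2 := by nlinarith
  set x : ℚ := m * ((r : ℚ) ^ 2 - (s : ℚ) ^ 2) with hxdef
  set y : ℚ := (r : ℚ) * ((r : ℚ) ^ 2 - (s : ℚ) ^ 2) * m * (m + 1) with hydef
  have hypos : 0 < y := by positivity
  have hy0 : y ≠ 0 := ne_of_gt hypos
  have heq : (Gcurve r s m).Equation x y := by
    rw [WeierstrassCurve.Affine.equation_iff]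
    simp only [Gcurve, hxdef, hydef]
    ring
  have h : (Gcurve r s m).Nonsingular x y := by
    rw [WeierstrassCurve.Affine.nonsingular_iff]
    refine ⟨heq, Or.inr ?_⟩
    simp only [Gcurve]
    intro hcon
    nlinarith [hypos]
  have hYne : y ≠ (Gcurve r s m).negY x y := by
    simp only [WeierstrassCurve.Affine.negY, Gcurve]
    intro hcon
    nlinarith [hypos]
  -- the point (0, 0) is nonsingular
  have h00 : (Gcurve r s m).Nonsingular 0 0 := by
    rw [WeierstrassCurve.Affine.nonsingular_iff]
    constructor
    · rw [WeierstrassCurve.Affine.equation_iff]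
      simp [Gcurve]
    · left
      simp only [Gcurve]
      intro hcon
      have : (0:ℚ) < m ^ 2 * ((r : ℚ) ^ 2 - (s : ℚ) ^ 2) ^ 2 := by positivity
      nlinarith
  -- slope of the tangent at the point
  have hL : (Gcurve r s m).slope x x y y = (r : ℚ) * (m + 1) := by
    rw [WeierstrassCurve.Affine.slope_of_Y_ne rfl hYne]
    simp only [Gcurve, WeierstrassCurve.Affine.negY, hxdef, hydef]
    rw [div_eq_iff (by intro hcon; apply hy0; rw [hydef]; nlinarith)]
    ring
  have hX : (Gcurve r s m).addX x x ((Gcurve r s m).slope x x y y) = 0 := by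
    rw [hL]
    simp only [WeierstrassCurve.Affine.addX, Gcurve, hxdef]
    ring
  have hY : (Gcurve r s m).addY x x y ((Gcurve r s m).slope x x y y) = 0 := by
    rw [WeierstrassCurve.Affine.addY, WeierstrassCurve.Affine.negAddY, hX, hL]
    simp only [WeierstrassCurve.Affine.negY, Gcurve, hxdef, hydef]
    ring
  -- doubling: 2T = (0, 0)
  have h2T : WeierstrassCurve.Affine.Point.some (h := h) + WeierstrassCurve.Affine.Point.some (h := h) =
      WeierstrassCurve.Affine.Point.some (h := h00) := by
    rw [WeierstrassCurve.Affine.Point.add_self_of_Y_ne hYne]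
    have key : ∀ (a b : ℚ) (ha : (Gcurve r s m).Nonsingular a b),
        a = 0 → b = 0 → WeierstrassCurve.Affine.Point.some (h := ha) =
          WeierstrassCurve.Affine.Point.some (h := h00) := by
      rintro a b ha rfl rfl
      rfl
    exact key _ _ _ hX hY
  have h4T : WeierstrassCurve.Affine.Point.some (h := h00) + WeierstrassCurve.Affine.Point.some (h := h00) =
      0 := by
    apply WeierstrassCurve.Affine.Point.add_self_of_Y_eq
    simp [Gcurve, WeierstrassCurve.Affine.negY]
  have hne : WeierstrassCurve.Affine.Point.some (h := h00) ≠ 0 := by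
    intro hcon
    exact WeierstrassCurve.Affine.Point.some_ne_zero h00 hcon
  have hord : addOrderOf (WeierstrassCurve.Affine.Point.some (h := h)) = 4 := by
    have : (4 : ℕ) = 2 ^ (1 + 1) := by norm_num
    rw [this]
    haveI : Fact (Nat.Prime 2) := ⟨Nat.prime_two⟩
    apply addOrderOf_eq_prime_pow
    · rw [pow_one, two_nsmul, h2T]
      exact hne
    · have h2 : (2 : ℕ) • WeierstrassCurve.Affine.Point.some (h := h) =
          WeierstrassCurve.Affine.Point.some (h := h00) := by rw [two_nsmul, h2T]
      have e : ((2 : ℕ) ^ (1 + 1)) • WeierstrassCurve.Affine.Point.some (h := h) =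
          (2 : ℕ) • ((2 : ℕ) • WeierstrassCurve.Affine.Point.some (h := h)) := by
        rw [show ((2 : ℕ) ^ (1 + 1)) = 2 * 2 from by norm_num, mul_nsmul]
      rw [e, h2, two_nsmul, h4T]
  exact ⟨h, hord, by rw [addOrderOf_neg]; exact hord⟩
end

section
/- Let r, s be coprime integers with 0 ≤ s < r and let m be a positive rational number with not (s = 0 and m = 1). Set M₀ = m(r²−s²) and suppose M₀ = u² with u a positive rational number, and suppose M₁ = r(m+1)(r(m+1) + 2u) = w² with w a nonnegative rational number. Then X₁ = M₀ + (r(m+1) + w)·u is the X-coordinate of a rational point on G_θ^m, and every rational point on G_θ^m with X-coordinate X₁ has exact additive order 8 in G_θ^m(ℚ). -/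
private lemma some_congr' {F : Type*} [Field F] {W : WeierstrassCurve.Affine F}
    {x y x' y' : F} (h : W.Nonsingular x y) (hx : x = x') (hy : y = y') :
    ∃ h' : W.Nonsingular x' y', WeierstrassCurve.Affine.Point.some _ _ h = .some _ _ h' := by
  subst hx; subst hy; exact ⟨h, rfl⟩

open WeierstrassCurve.Affine WeierstrassCurve.Affine.Point in
theorem stmt_9 (r s : ℤ) (hrs : IsCoprime r s) (hs : 0 ≤ s) (hsr : s < r)
    (m : ℚ) (hm : 0 < m) (hnd : ¬(s = 0 ∧ m = 1))
    (u : ℚ) (hu : 0 < u) (hu2 : m * ((r : ℚ) ^ 2 - (s : ℚ) ^ 2) = u ^ 2)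
    (w : ℚ) (hw : 0 ≤ w)
    (hw2 : (r : ℚ) * (m + 1) * ((r : ℚ) * (m + 1) + 2 * u) = w ^ 2) :
    (∃ Y : ℚ,
      (Gcurve r s m).Nonsingular (m * ((r : ℚ) ^ 2 - (s : ℚ) ^ 2) + ((r : ℚ) * (m + 1) + w) * u) Y) ∧
    ∀ (Y : ℚ)
      (h : (Gcurve r s m).Nonsingular
        (m * ((r : ℚ) ^ 2 - (s : ℚ) ^ 2) + ((r : ℚ) * (m + 1) + w) * u) Y),
      addOrderOf (WeierstrassCurve.Affine.Point.some _ _ h) = 8 := by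
  set x₁ : ℚ := m * ((r : ℚ) ^ 2 - (s : ℚ) ^ 2) + ((r : ℚ) * (m + 1) + w) * u with hx₁def
  have hrZ : (1 : ℤ) ≤ r := by omega
  have hrQ : (0 : ℚ) < (r : ℚ) := by exact_mod_cast lt_of_lt_of_le one_pos (by exact_mod_cast hrZ)
  have hsQ : (0 : ℚ) ≤ (s : ℚ) := by exact_mod_cast hs
  have hsrQ : (s : ℚ) < (r : ℚ) := by exact_mod_cast hsr
  have hm1 : (0 : ℚ) < m + 1 := by linarith
  have hRpos : 0 < (r : ℚ) * (m + 1) := mul_pos hrQ hm1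
  have hdiff : (0 : ℚ) < (r : ℚ) ^ 2 - (s : ℚ) ^ 2 := by nlinarith
  have hu2pos : (0 : ℚ) < m * ((r : ℚ) ^ 2 - (s : ℚ) ^ 2) := mul_pos hm hdiff
  have hwpos : 0 < w := by
    rcases eq_or_lt_of_le hw with h0 | h0
    · exfalso
      have h1 : (0 : ℚ) < w ^ 2 := by rw [← hw2]; nlinarith
      rw [← h0] at h1; simp at h1
    · exact h0
  have hx1pos : 0 < x₁ := by
    have : 0 < ((r : ℚ) * (m + 1) + w) * u := mul_pos (by linarith) hu
    rw [hx₁def]; linarith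
  have hK : 0 < (r : ℚ) ^ 2 * (m - 1) ^ 2 + 4 * m * (s : ℚ) ^ 2 := by
    by_cases hs0 : s = 0
    · have hm1' : m ≠ 1 := fun h => hnd ⟨hs0, h⟩
      have h2 : (0 : ℚ) < (m - 1) ^ 2 :=
        lt_of_le_of_ne (sq_nonneg _) (Ne.symm (pow_ne_zero 2 (sub_ne_zero.mpr hm1')))
      have h3 : 0 < (r : ℚ) ^ 2 * (m - 1) ^ 2 := mul_pos (pow_pos hrQ 2) h2
      nlinarith [sq_nonneg (s : ℚ)]
    · have h2 : (0 : ℚ) < (s : ℚ) ^ 2 := by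
        have : (s : ℚ) ≠ 0 := Int.cast_ne_zero.mpr hs0
        exact lt_of_le_of_ne (sq_nonneg _) (Ne.symm (pow_ne_zero 2 this))
      nlinarith [sq_nonneg ((r : ℚ) * (m - 1)), mul_pos hm h2]
  have hΔ : (Gcurve r s m).Δ ≠ 0 := by
    have hΔval : (Gcurve r s m).Δ =
        16 * (m ^ 2 * ((r : ℚ) ^ 2 - (s : ℚ) ^ 2) ^ 2) ^ 2 *
          ((r : ℚ) ^ 2 * (m + 1) ^ 2 * ((r : ℚ) ^ 2 * (m - 1) ^ 2 + 4 * m * (s : ℚ) ^ 2)) := by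
      simp only [Gcurve, WeierstrassCurve.Δ, WeierstrassCurve.b₂, WeierstrassCurve.b₄,
        WeierstrassCurve.b₆, WeierstrassCurve.b₈]
      ring
    rw [hΔval]
    have h1 : 0 < m ^ 2 * ((r : ℚ) ^ 2 - (s : ℚ) ^ 2) ^ 2 := mul_pos (pow_pos hm 2) (pow_pos hdiff 2)
    have h2 : 0 < (r : ℚ) ^ 2 * (m + 1) ^ 2 := mul_pos (pow_pos hrQ 2) (pow_pos hm1 2)
    positivity
  have hnegY : ∀ x y : ℚ, (Gcurve r s m).negY x y = -y := by
    intro x y; simp [WeierstrassCurve.Affine.negY, Gcurve]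
  have heqiff : ∀ x y : ℚ, (Gcurve r s m).Equation x y ↔
      y ^ 2 = x ^ 3 + ((r : ℚ) ^ 2 * m ^ 2 + 2 * (s : ℚ) ^ 2 * m + (r : ℚ) ^ 2) * x ^ 2
        + m ^ 2 * ((r : ℚ) ^ 2 - (s : ℚ) ^ 2) ^ 2 * x := by
    intro x y
    rw [WeierstrassCurve.Affine.equation_iff]
    simp only [Gcurve]
    constructor <;> intro h <;> linarith
  -- the explicit square root at x₁
  have heq₀ : (Gcurve r s m).Equation x₁ (x₁ * w) := by
    rw [heqiff, hx₁def]
    linear_combination ((-1)*u^2*w^2 + u^3*w + (2)*(s:ℚ)^2*m*u*w + (-1)*(s:ℚ)^2*m*u^2 + (-1)*(s:ℚ)^4*m^2 + (-2)*(r:ℚ)*u^2*w + (r:ℚ)*u^3 + (-2)*(r:ℚ)*m*u^2*w + (r:ℚ)*m*u^3 + (2)*(r:ℚ)*(s:ℚ)^2*m*u + (2)*(r:ℚ)*(s:ℚ)^2*m^2*u + (-1)*(r:ℚ)^2*u^2 + (-2)*(r:ℚ)^2*m*u*w + (-1)*(r:ℚ)^2*m*u^2 + (-1)*(r:ℚ)^2*m^2*u^2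 + (2)*(r:ℚ)^2*(s:ℚ)^2*m^2 + (-2)*(r:ℚ)^3*m*u + (-2)*(r:ℚ)^3*m^2*u + (-1)*(r:ℚ)^4*m^2) * hw2 + ((2)*(r:ℚ)*u^2*w + (2)*(r:ℚ)*m*u^2*w + (-2)*(r:ℚ)*(s:ℚ)^2*m*u + (-2)*(r:ℚ)*(s:ℚ)^2*m^2*u + (2)*(r:ℚ)^2*u^2 + (4)*(r:ℚ)^2*m*u^2 + (2)*(r:ℚ)^2*m^2*u^2 + (2)*(r:ℚ)^3*m*u + (2)*(r:ℚ)^3*m^2*u) * hu2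
  -- key0 : doubling a point with x-coordinate 0 gives 0
  have key0 : ∀ (y : ℚ) (h : (Gcurve r s m).Nonsingular 0 y),
      Point.some _ _ h + Point.some _ _ h = 0 := by
    intro y h
    have h2 : y ^ 2 = 0 := by
      have := (heqiff 0 y).mp h.1
      simpa using this
    have h0 : y = 0 := by
      exact (pow_eq_zero_iff two_ne_zero).mp h2
    exact add_self_of_Y_eq (by rw [hnegY]; simp [h0])
  -- key2 : doubling a point with x-coordinate u² lands at x-coordinate 0
  have key2 : ∀ (y : ℚ) (h : (Gcurve r s m).Nonsingular (u ^ 2) y),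
      ∃ (y' : ℚ) (h' : (Gcurve r s m).Nonsingular 0 y'),
        Point.some _ _ h + Point.some _ _ h = Point.some _ _ h' := by
    intro y h
    have hy2 : y ^ 2 = (u ^ 2 * ((r : ℚ) * (m + 1))) ^ 2 := by
      have heq := (heqiff _ _).mp h.1
      linear_combination heq + (m * ((r:ℚ)^2 - (s:ℚ)^2) * u^2 - u^4) * hu2
    have hy0 : y ≠ 0 := by
      intro h0
      rw [h0] at hy2
      have : 0 < (u ^ 2 * ((r : ℚ) * (m + 1))) ^ 2 := by positivity
      simp [← hy2] at this
    have hyy : y ≠ (Gcurve r s m).negY (u ^ 2) y := by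
      rw [hnegY]; intro hc; apply hy0; linarith
    have hX : (Gcurve r s m).addX (u ^ 2) (u ^ 2) ((Gcurve r s m).slope (u ^ 2) (u ^ 2) y y) = 0 := by
      rw [slope_of_Y_ne rfl hyy, hnegY]
      simp only [WeierstrassCurve.Affine.addX, hnegY, Gcurve]
      have h2y : y + y ≠ 0 := by intro hc; apply hy0; linarith
      field_simp [h2y]
      linear_combination ((-8)*u^2 + (-8)*(s:ℚ)^2*m + (-4)*(r:ℚ)^2 + (-4)*(r:ℚ)^2*m^2) * hy2 + ((-9)*u^6 + (-15)*(s:ℚ)^2*m*u^4 + (-7)*(s:ℚ)^4*m^2*u^2 + (-1)*(s:ℚ)^6*m^3 + (-4)*(r:ℚ)^2*u^4 + (7)*(r:ℚ)^2*m*u^4 + (-4)*(r:ℚ)^2*m^2*u^4 + (-4)*(r:ℚ)^2*(s:ℚ)^2*m*u^2 + (6)*(r:ℚ)^2*(s:ℚ)^2*m^2*u^2 + (-4)*(r:ℚ)^2*(s:ℚ)^2*m^3*u^2 + (3)*(r:ℚ)^2*(s:ℚ)^4*m^3 + (4)*(r:ℚ)^4*m*u^2 + (r:ℚ)^4*m^2*u^2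 + (4)*(r:ℚ)^4*m^3*u^2 + (-3)*(r:ℚ)^4*(s:ℚ)^2*m^3 + (r:ℚ)^6*m^3) * hu2
    obtain ⟨h', e⟩ := some_congr' (nonsingular_add h h fun hxy => hyy hxy.2) hX rfl
    exact ⟨_, h', by rw [add_self_of_Y_ne hyy]; exact e⟩
  -- key1 : doubling a point with x-coordinate x₁ lands at x-coordinate u²
  have key1 : ∀ (y : ℚ) (h : (Gcurve r s m).Nonsingular x₁ y),
      ∃ (y' : ℚ) (h' : (Gcurve r s m).Nonsingular (u ^ 2) y'),
        Point.some _ _ h + Point.some _ _ h = Point.some _ _ h' := by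
    intro y h
    have hy2 : y ^ 2 = (x₁ * w) ^ 2 := by
      have heq := (heqiff _ _).mp h.1
      rw [hx₁def] at heq ⊢
      linear_combination heq
        + (u^2*w^2 - u^3*w - 2*(s:ℚ)^2*m*u*w + (s:ℚ)^2*m*u^2 + (s:ℚ)^4*m^2 + 2*(r:ℚ)*u^2*w
          - (r:ℚ)*u^3 + 2*(r:ℚ)*m*u^2*w - (r:ℚ)*m*u^3 - 2*(r:ℚ)*(s:ℚ)^2*m*u
          - 2*(r:ℚ)*(s:ℚ)^2*m^2*u + (r:ℚ)^2*u^2 + 2*(r:ℚ)^2*m*u*w + (r:ℚ)^2*m*u^2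
          + (r:ℚ)^2*m^2*u^2 - 2*(r:ℚ)^2*(s:ℚ)^2*m^2 + 2*(r:ℚ)^3*m*u + 2*(r:ℚ)^3*m^2*u
          + (r:ℚ)^4*m^2) * hw2
        + (-2*(r:ℚ)*u^2*w - 2*(r:ℚ)*m*u^2*w + 2*(r:ℚ)*(s:ℚ)^2*m*u + 2*(r:ℚ)*(s:ℚ)^2*m^2*u
          - 2*(r:ℚ)^2*u^2 - 4*(r:ℚ)^2*m*u^2 - 2*(r:ℚ)^2*m^2*u^2 - 2*(r:ℚ)^3*m*u
          - 2*(r:ℚ)^3*m^2*u) * hu2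
    have hy0 : y ≠ 0 := by
      intro h0
      rw [h0] at hy2
      have : 0 < (x₁ * w) ^ 2 := by positivity
      simp [← hy2] at this
    have hyy : y ≠ (Gcurve r s m).negY x₁ y := by
      rw [hnegY]; intro hc; apply hy0; linarith
    have hX : (Gcurve r s m).addX x₁ x₁ ((Gcurve r s m).slope x₁ x₁ y y) = u ^ 2 := by
      rw [slope_of_Y_ne rfl hyy, hnegY]
      simp only [WeierstrassCurve.Affine.addX, hnegY, Gcurve]
      have h2y : y + y ≠ 0 := by intro hc; apply hy0; linarith
      field_simp [h2y]
      rw [hx₁def] at hy2 ⊢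
      linear_combination ((-8)*u*w + (-4)*u^2 + (-8)*(r:ℚ)*u + (-8)*(r:ℚ)*m*u + (-4)*(r:ℚ)^2 + (-8)*(r:ℚ)^2*m + (-4)*(r:ℚ)^2*m^2) * hy2 + ((8)*u^3*w^3 + (-5)*u^4*w^2 + (-16)*(s:ℚ)^2*m*u^2*w^2 + (4)*(s:ℚ)^2*m*u^3*w + (8)*(s:ℚ)^4*m^2*u*w + (24)*(r:ℚ)*u^3*w^2 + (-12)*(r:ℚ)*u^4*w + (-10)*(r:ℚ)*u^5 + (24)*(r:ℚ)*m*u^3*w^2 + (-12)*(r:ℚ)*m*u^4*w + (-10)*(r:ℚ)*m*u^5 + (-32)*(r:ℚ)*(s:ℚ)^2*m*u^2*w + (-4)*(r:ℚ)*(s:ℚ)^2*m*u^3 + (-32)*(r:ℚ)*(s:ℚ)^2*m^2*u^2*w + (-4)*(r:ℚ)*(s:ℚ)^2*m^2*u^3 + (8)*(r:ℚ)*(s:ℚ)^4*m^2*u + (8)*(r:ℚ)*(s:ℚ)^4*m^3*u + (4)*(r:ℚ)^2*u^2*w^2 + (20)*(r:ℚ)^2*u^3*w + (-7)*(r:ℚ)^2*u^4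 + (24)*(r:ℚ)^2*m*u^2*w^2 + (36)*(r:ℚ)^2*m*u^3*w + (-14)*(r:ℚ)^2*m*u^4 + (4)*(r:ℚ)^2*m^2*u^2*w^2 + (20)*(r:ℚ)^2*m^2*u^3*w + (-7)*(r:ℚ)^2*m^2*u^4 + (-8)*(r:ℚ)^2*(s:ℚ)^2*m*u*w + (-12)*(r:ℚ)^2*(s:ℚ)^2*m*u^2 + (-32)*(r:ℚ)^2*(s:ℚ)^2*m^2*u*w + (-24)*(r:ℚ)^2*(s:ℚ)^2*m^2*u^2 + (-8)*(r:ℚ)^2*(s:ℚ)^2*m^3*u*w + (-12)*(r:ℚ)^2*(s:ℚ)^2*m^3*u^2 + (4)*(r:ℚ)^2*(s:ℚ)^4*m^2 + (8)*(r:ℚ)^2*(s:ℚ)^4*m^3 + (4)*(r:ℚ)^2*(s:ℚ)^4*m^4 + (8)*(r:ℚ)^3*u^2*w + (4)*(r:ℚ)^3*u^3 + (56)*(r:ℚ)^3*m*u^2*w + (16)*(r:ℚ)^3*m*u^3 + (56)*(r:ℚ)^3*m^2*u^2*w + (16)*(r:ℚ)^3*m^2*u^3 + (8)*(r:ℚ)^3*m^3*u^2*w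 + (4)*(r:ℚ)^3*m^3*u^3 + (-8)*(r:ℚ)^3*(s:ℚ)^2*m*u + (-40)*(r:ℚ)^3*(s:ℚ)^2*m^2*u + (-40)*(r:ℚ)^3*(s:ℚ)^2*m^3*u + (-8)*(r:ℚ)^3*(s:ℚ)^2*m^4*u + (4)*(r:ℚ)^4*u^2 + (8)*(r:ℚ)^4*m*u*w + (28)*(r:ℚ)^4*m*u^2 + (24)*(r:ℚ)^4*m^2*u*w + (48)*(r:ℚ)^4*m^2*u^2 + (8)*(r:ℚ)^4*m^3*u*w + (28)*(r:ℚ)^4*m^3*u^2 + (4)*(r:ℚ)^4*m^4*u^2 + (-8)*(r:ℚ)^4*(s:ℚ)^2*m^2 + (-16)*(r:ℚ)^4*(s:ℚ)^2*m^3 + (-8)*(r:ℚ)^4*(s:ℚ)^2*m^4 + (8)*(r:ℚ)^5*m*u + (32)*(r:ℚ)^5*m^2*u + (32)*(r:ℚ)^5*m^3*u + (8)*(r:ℚ)^5*m^4*u + (4)*(r:ℚ)^6*m^2 + (8)*(r:ℚ)^6*m^3 + (4)*(r:ℚ)^6*m^4) * hw2 + ((8)*(r:ℚ)*(s:ℚ)^2*m*u^2*w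 + (8)*(r:ℚ)*(s:ℚ)^2*m^2*u^2*w + (-24)*(r:ℚ)^2*u^3*w + (-20)*(r:ℚ)^2*u^4 + (-48)*(r:ℚ)^2*m*u^3*w + (-40)*(r:ℚ)^2*m*u^4 + (-24)*(r:ℚ)^2*m^2*u^3*w + (-20)*(r:ℚ)^2*m^2*u^4 + (12)*(r:ℚ)^2*(s:ℚ)^2*m*u^2 + (24)*(r:ℚ)^2*(s:ℚ)^2*m^2*u^2 + (12)*(r:ℚ)^2*(s:ℚ)^2*m^3*u^2 + (-8)*(r:ℚ)^3*u^2*w + (-24)*(r:ℚ)^3*u^3 + (-32)*(r:ℚ)^3*m*u^2*w + (-72)*(r:ℚ)^3*m*u^3 + (-32)*(r:ℚ)^3*m^2*u^2*w + (-72)*(r:ℚ)^3*m^2*u^3 + (-8)*(r:ℚ)^3*m^3*u^2*w + (-24)*(r:ℚ)^3*m^3*u^3 + (8)*(r:ℚ)^3*(s:ℚ)^2*m*u + (24)*(r:ℚ)^3*(s:ℚ)^2*m^2*u + (24)*(r:ℚ)^3*(s:ℚ)^2*m^3*u + (8)*(r:ℚ)^3*(s:ℚ)^2*m^4*u + (-8)*(r:ℚ)^4*u^2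 + (-44)*(r:ℚ)^4*m*u^2 + (-72)*(r:ℚ)^4*m^2*u^2 + (-44)*(r:ℚ)^4*m^3*u^2 + (-8)*(r:ℚ)^4*m^4*u^2 + (-8)*(r:ℚ)^5*m*u + (-24)*(r:ℚ)^5*m^2*u + (-24)*(r:ℚ)^5*m^3*u + (-8)*(r:ℚ)^5*m^4*u) * hu2
    obtain ⟨h', e⟩ := some_congr' (nonsingular_add h h fun hxy => hyy hxy.2) hX rfl
    exact ⟨_, h', by rw [add_self_of_Y_ne hyy]; exact e⟩
  constructor
  · exact ⟨x₁ * w, (WeierstrassCurve.Affine.equation_iff_nonsingular_of_Δ_ne_zero (W := Gcurve r s m) hΔ).mp heq₀⟩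
  · intro Y h
    obtain ⟨Y₂, h₂, e₂⟩ := key1 Y h
    obtain ⟨Y₃, h₃, e₃⟩ := key2 Y₂ h₂
    have e₄ := key0 Y₃ h₃
    have s2 : (2 : ℕ) • (Point.some _ _ h) = Point.some _ _ h₂ := by rw [two_nsmul, e₂]
    have s4 : (2 : ℕ) ^ 2 • (Point.some _ _ h) = Point.some _ _ h₃ := by
      rw [pow_two, mul_smul, s2, two_nsmul, e₃]
    have s8 : (2 : ℕ) ^ 3 • (Point.some _ _ h) = 0 := by
      rw [pow_succ', mul_smul, s4, two_nsmul, e₄]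
    have := addOrderOf_eq_prime_pow (x := Point.some _ _ h) (p := 2) (n := 2)
      (by rw [s4]; exact some_ne_zero h₃) s8
    simpa using this
end

section
/- Let r, s be coprime integers with 0 ≤ s < r and suppose θ is a Pythagorean angle, i.e., r² − s² = t² for some positive integer t. Then N_θ = ℕ: every positive integer n admits a θ-parallelogram envelope, i.e., there exist positive rational numbers a, b, c, d, e with a² + b² − (2s/r)ab = c², a² + d² + (2s/r)ad = e², and a(b+d) = r·n. -/
set_option maxHeartbeats 1000000 in
theorem stmt_15 (r s : ℤ) (hrs : IsCoprime r s) (hs : 0 ≤ s) (hsr : s < r)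
    (t : ℕ) (ht : 0 < t) (hpyth : r ^ 2 - s ^ 2 = (t : ℤ) ^ 2) :
    ∀ n : ℕ, 0 < n → ∃ a b c d e : ℚ, IsEnvelope r s n a b c d e := by
  intro n hn
  have hrZ : (0:ℤ) < r := lt_of_le_of_lt hs hsr
  -- basic cast facts
  have hrQ : (0:ℚ) < (r:ℚ) := by exact_mod_cast hrZ
  have hsQ : (0:ℚ) ≤ (s:ℚ) := by exact_mod_cast hs
  have htQ : (0:ℚ) < (t:ℚ) := by exact_mod_cast ht
  have ht1 : (1:ℚ) ≤ (t:ℚ) := by exact_mod_cast ht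
  have hnQ : (0:ℚ) < (n:ℚ) := by exact_mod_cast hn
  have htne : (t:ℚ) ≠ 0 := ne_of_gt htQ
  have hrne : (r:ℚ) ≠ 0 := ne_of_gt hrQ
  have ht2 : (r:ℚ)^2 - (s:ℚ)^2 = (t:ℚ)^2 := by exact_mod_cast hpyth
  -- natural number setup
  set S : ℕ := s.toNat with hSdef
  have hSQ : ((S:ℚ)) = (s:ℚ) := by
    have : ((S:ℤ)) = s := Int.toNat_of_nonneg hs
    exact_mod_cast this
  set N : ℕ := t * n with hNdef
  have hN1 : 1 ≤ N := Nat.one_le_iff_ne_zero.mpr (Nat.mul_ne_zero ht.ne' hn.ne')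
  have hNQ : (0:ℚ) < (N:ℚ) := by exact_mod_cast hN1
  set B : ℕ := 3 * (S + t) with hBdef
  have hBpos : 0 < B := by
    have : 0 < S + t := Nat.lt_of_lt_of_le ht (Nat.le_add_left _ _)
    omega
  have hBQ : (0:ℚ) < (B:ℚ) := by exact_mod_cast hBpos
  set J : ℕ := Nat.sqrt (N * B^2) with hJdef
  -- key natural number inequalities
  have hnat1 : N * B^2 < (J+1)^2 := by
    simpa using Nat.lt_succ_sqrt' (N * B^2)
  have hJle : J ≤ N * B := by
    have h1 : N * B^2 ≤ (N*B)^2 := by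
      have : N ≤ N^2 := Nat.le_self_pow two_ne_zero N
      calc N * B^2 ≤ N^2 * B^2 := Nat.mul_le_mul_right _ this
        _ = (N*B)^2 := by ring
    calc J = Nat.sqrt (N * B^2) := rfl
      _ ≤ Nat.sqrt ((N*B)^2) := Nat.sqrt_le_sqrt h1
      _ = N*B := Nat.sqrt_eq' _
  have hnat2 : (J+1)^2 ≤ N * B^2 + 3*(N*B) := by
    have h1 : J^2 ≤ N * B^2 := Nat.sqrt_le' _
    have h2 : 1 ≤ N*B := Nat.one_le_iff_ne_zero.mpr
      (Nat.mul_ne_zero (by omega) hBpos.ne')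
    calc (J+1)^2 = J^2 + 2*J + 1 := by ring
      _ ≤ N*B^2 + 2*(N*B) + (N*B) := by
          have := Nat.mul_le_mul_left 2 hJle
          omega
      _ = N*B^2 + 3*(N*B) := by ring
  -- rational parameter l
  set l : ℚ := ((J:ℚ)+1) / (B:ℚ) with hldef
  have hJQ : (0:ℚ) < (J:ℚ) + 1 := by
    have : (0:ℚ) ≤ (J:ℚ) := Nat.cast_nonneg J
    linarith
  have hlpos : 0 < l := by rw [hldef]; exact div_pos hJQ hBQ
  have hB3 : (B:ℚ) = 3 * ((S:ℚ) + (t:ℚ)) := by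
    rw [hBdef]; push_cast; ring
  have hwpos : (0:ℚ) < (S:ℚ) + (t:ℚ) := by
    have h0 : (0:ℚ) ≤ (S:ℚ) := Nat.cast_nonneg S
    linarith
  set ε : ℚ := l^2 - (N:ℚ) with hεdef
  have hεexp : ε = (((J:ℚ)+1)^2 - (N:ℚ)*(B:ℚ)^2) / (B:ℚ)^2 := by
    rw [hεdef, hldef]; field_simp
  have hεpos : 0 < ε := by
    rw [hεexp]
    have h1 : (N:ℚ)*(B:ℚ)^2 < ((J:ℚ)+1)^2 := by exact_mod_cast hnat1
    have h2 : 0 < ((J:ℚ)+1)^2 - (N:ℚ)*(B:ℚ)^2 := by linarith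
    exact div_pos h2 (pow_pos hBQ 2)
  have hεne : ε ≠ 0 := ne_of_gt hεpos
  have hkey : ((S:ℚ) + (t:ℚ)) * ε ≤ (N:ℚ) := by
    rw [hεexp, ← mul_div_assoc, div_le_iff₀ (pow_pos hBQ 2)]
    have h2 : ((J:ℚ)+1)^2 ≤ (N:ℚ)*(B:ℚ)^2 + 3*((N:ℚ)*(B:ℚ)) := by exact_mod_cast hnat2
    have h3 : ((J:ℚ)+1)^2 - (N:ℚ)*(B:ℚ)^2 ≤ 3*((N:ℚ)*(B:ℚ)) := by linarith
    calc ((S:ℚ)+(t:ℚ)) * (((J:ℚ)+1)^2 - (N:ℚ)*(B:ℚ)^2)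
        ≤ ((S:ℚ)+(t:ℚ)) * (3*((N:ℚ)*(B:ℚ))) := by
          exact mul_le_mul_of_nonneg_left h3 hwpos.le
      _ = (N:ℚ) * (B:ℚ)^2 := by rw [hB3]; ring
  -- the parameter m
  set m : ℚ := 2*(N:ℚ)/ε with hmdef
  have hmpos : 0 < m := by
    rw [hmdef]; exact div_pos (by linarith) hεpos
  have hm : m * ε = 2*(N:ℚ) := by
    rw [hmdef]; field_simp
  have hmge : 2*((S:ℚ) + (t:ℚ)) ≤ m := by
    rw [hmdef, le_div_iff₀ hεpos]; linarith
  have hmge' : 2*((s:ℚ) + (t:ℚ)) ≤ m := by rwa [← hSQ]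
  -- derived positivity
  have hm1 : (0:ℚ) < m + 1 := by linarith
  have hm2 : (0:ℚ) < m + 2 := by linarith
  have hm3 : (0:ℚ) < m + 3 := by linarith
  have hm1ne : m + 1 ≠ 0 := ne_of_gt hm1
  have hm2ne : m + 2 ≠ 0 := ne_of_gt hm2
  have hP : (0:ℚ) < m^2 + 4*m + 5 := by linarith [sq_nonneg (m+2)]
  have hPne : m^2 + 4*m + 5 ≠ 0 := ne_of_gt hP
  -- main quantities
  set p : ℚ := 2*l*(m+1)/(m^2+4*m+5) with hpdef
  have hppos : 0 < p := by
    rw [hpdef]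
    exact div_pos (by linarith [mul_pos hlpos hm1]) hP
  set β₁ : ℚ := (m+1)*(m+3)/(2*(m+2)) with hβ₁def
  set β₂ : ℚ := ((m+1)^4 - 4)/(4*(m+1)^2) with hβ₂def
  have hβ₁pos : 0 < β₁ := by
    rw [hβ₁def]; exact div_pos (mul_pos hm1 hm3) (by linarith)
  set a : ℚ := p*(r:ℚ)/(t:ℚ) with hadef
  set b : ℚ := p*(β₁ + (s:ℚ)/(t:ℚ)) with hbdef
  set c : ℚ := p*((m+2)^2+1)/(2*(m+2)) with hcdef
  set d : ℚ := p*(β₂ - (s:ℚ)/(t:ℚ)) with hddef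
  set e : ℚ := p*((m+1)^4+4)/(4*(m+1)^2) with hedef
  have hapos : 0 < a := by
    rw [hadef]; exact div_pos (mul_pos hppos hrQ) htQ
  have hbpos : 0 < b := by
    rw [hbdef]
    exact mul_pos hppos (add_pos_of_pos_of_nonneg hβ₁pos (div_nonneg hsQ htQ.le))
  have hcpos : 0 < c := by
    rw [hcdef]
    exact div_pos (mul_pos hppos (by linarith [sq_nonneg (m+2)])) (by linarith)
  have hepos : 0 < e := by
    rw [hedef]
    exact div_pos (mul_pos hppos (by linarith [pow_pos hm1 4]))
      (by linarith [pow_pos hm1 2])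
  have hβ₂s : (s:ℚ)/(t:ℚ) < β₂ := by
    rw [hβ₂def, div_lt_div_iff₀ htQ (by linarith [pow_pos hm1 2])]
    have hz : 2*(s:ℚ) + 2*(t:ℚ) + 1 ≤ m + 1 := by linarith
    have hzpos : (0:ℚ) < (m+1)^2 := pow_pos hm1 2
    have hApos : (0:ℚ) ≤ 2*(s:ℚ) + 2*(t:ℚ) + 1 := by linarith
    have e1 : (2*(s:ℚ)+2*(t:ℚ)+1)^2 ≤ (m+1)^2 := pow_le_pow_left₀ hApos hz 2
    have c1 : (0:ℚ) ≤ (s:ℚ)*(t:ℚ) := mul_nonneg hsQ htQ.le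
    have hz2 : 4*(s:ℚ) + 4*(t:ℚ) + 1 ≤ (m+1)^2 := by
      linarith [e1, c1, sq_nonneg (s:ℚ), sq_nonneg (t:ℚ)]
    have hz1 : (1:ℚ) ≤ (m+1)^2 := by linarith [hsQ, ht1]
    have f1 : ((t:ℚ)*((m+1)^2))*(4*(s:ℚ)+4*(t:ℚ)+1) ≤ ((t:ℚ)*((m+1)^2))*((m+1)^2) :=
      mul_le_mul_of_nonneg_left hz2 (mul_nonneg htQ.le hzpos.le)
    have f2 : 4*(s:ℚ)*((m+1)^2) ≤ 4*(s:ℚ)*((m+1)^2)*(t:ℚ) := by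
      have hprod := mul_nonneg (mul_nonneg hsQ hzpos.le) (sub_nonneg.2 ht1)
      linarith [hprod]
    have f3 : 4*(t:ℚ) < 4*(t:ℚ)^2*((m+1)^2) + (t:ℚ)*((m+1)^2) := by
      have g1 := mul_le_mul_of_nonneg_left hz1 (by positivity : (0:ℚ) ≤ 4*(t:ℚ)^2)
      have g2 := mul_le_mul_of_nonneg_left hz1 htQ.le
      have g3 : (t:ℚ)*1 ≤ (t:ℚ)*(t:ℚ) := mul_le_mul_of_nonneg_left ht1 htQ.le
      linarith [g1, g2, g3]
    linarith [f1, f2, f3]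
  have hdpos : 0 < d := by
    rw [hddef]
    exact mul_pos hppos (by linarith)
  -- equation 1
  have eq1 : a^2 + b^2 - (2*(s:ℚ)/(r:ℚ))*a*b = c^2 := by
    have h1 : a^2 + b^2 - (2*(s:ℚ)/(r:ℚ))*a*b
        = p^2*((r:ℚ)^2 - (s:ℚ)^2)/(t:ℚ)^2 + (p*β₁)^2 := by
      rw [hadef, hbdef]; field_simp; ring
    rw [h1, ht2]
    have h2 : p^2*((t:ℚ)^2)/(t:ℚ)^2 = p^2 := by field_simp
    rw [h2, hcdef, hβ₁def]
    field_simp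
    ring
  -- equation 2
  have eq2 : a^2 + d^2 + (2*(s:ℚ)/(r:ℚ))*a*d = e^2 := by
    have h1 : a^2 + d^2 + (2*(s:ℚ)/(r:ℚ))*a*d
        = p^2*((r:ℚ)^2 - (s:ℚ)^2)/(t:ℚ)^2 + (p*β₂)^2 := by
      rw [hadef, hddef]; field_simp; ring
    rw [h1, ht2]
    have h2 : p^2*((t:ℚ)^2)/(t:ℚ)^2 = p^2 := by field_simp
    rw [h2, hedef, hβ₂def]
    field_simp
    ring
  -- equation 3
  have hml : m * l^2 = (N:ℚ) * (m+2) := by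
    have h := hm
    rw [hεdef] at h
    linear_combination h
  have hσ : p^2 * (β₁ + β₂) = (N:ℚ) := by
    have hstep : p^2 * (β₁ + β₂) = m * l^2 / (m+2) := by
      rw [hpdef, hβ₁def, hβ₂def]
      field_simp
      ring
    rw [hstep, hml]
    exact mul_div_cancel_right₀ _ hm2ne
  have eq3 : a * (b + d) = (r:ℚ)*(n:ℚ) := by
    have hbd : b + d = p * (β₁ + β₂) := by rw [hbdef, hddef]; ring
    have hNc : (N:ℚ) = (t:ℚ)*(n:ℚ) := by rw [hNdef]; push_cast; ring
    calc a * (b+d) = (r:ℚ)/(t:ℚ) * (p^2 * (β₁ + β₂)) := by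
          rw [hadef, hbd]; ring
      _ = (r:ℚ)/(t:ℚ) * ((t:ℚ)*(n:ℚ)) := by rw [hσ, hNc]
      _ = (r:ℚ)*(n:ℚ) := by field_simp
  exact ⟨a, b, c, d, e, hapos, hbpos, hcpos, hdpos, hepos, eq1, eq2, eq3⟩
end

section
/- Let r, s be coprime integers with 0 ≤ s < r and suppose θ is a Pythagorean angle, i.e., r² − s² = t² for some positive integer t. Then for every positive integer n, the set of θ-parallelogram envelopes for n, i.e., the set of quintuples (a, b, c, d, e) of positive rational numbers satisfying a² + b² − (2s/r)ab = c², a² + d² + (2s/r)ad = e², and a(b+d) = r·n, is infinite. -/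
set_option maxHeartbeats 2000000

/- Auxiliary definitions: an explicit family of envelopes parametrized by a rational `lam`. -/

def eH (t n : ℕ) (lam : ℚ) : ℚ :=
  2 * ((t:ℚ)*n - lam^2) * (lam^2 + (t:ℚ)*n) /
    (5*lam^4 + 2*((t:ℚ)*n)*lam^2 + ((t:ℚ)*n)^2)

def eX (t n : ℕ) (lam : ℚ) : ℚ :=
  ((t:ℚ)*n - lam^2)^2 * ((t:ℚ)*n + 3*lam^2) /
    (2*lam^2*(5*lam^4 + 2*((t:ℚ)*n)*lam^2 + ((t:ℚ)*n)^2))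

def eY (t n : ℕ) (lam : ℚ) : ℚ :=
  (4*(lam^2 + (t:ℚ)*n)^4 - ((t:ℚ)*n - lam^2)^4) /
    (2*(lam^2 + (t:ℚ)*n)*((t:ℚ)*n - lam^2)*(5*lam^4 + 2*((t:ℚ)*n)*lam^2 + ((t:ℚ)*n)^2))

def eE (t n : ℕ) (lam : ℚ) : ℚ :=
  (4*(lam^2 + (t:ℚ)*n)^4 + ((t:ℚ)*n - lam^2)^4) /
    (2*(lam^2 + (t:ℚ)*n)*((t:ℚ)*n - lam^2)*(5*lam^4 + 2*((t:ℚ)*n)*lam^2 + ((t:ℚ)*n)^2))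

def env (r s : ℤ) (t n : ℕ) (lam : ℚ) : ℚ × ℚ × ℚ × ℚ × ℚ :=
  (eH t n lam * (r:ℚ) / (t:ℚ) * lam,
   (eX t n lam + eH t n lam * (s:ℚ) / (t:ℚ)) * lam,
   (((t:ℚ)*n - lam^2) / (2*lam^2)) * lam,
   (eY t n lam - eH t n lam * (s:ℚ) / (t:ℚ)) * lam,
   eE t n lam * lam)

lemma key1 (R S T X h c lamv : ℚ) (hR : R ≠ 0) (hT : T ≠ 0) (h2 : S^2 + T^2 = R^2)
    (hXhc : X^2 + h^2 = c^2) :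
    (h*R/T*lamv)^2 + ((X + h*S/T)*lamv)^2 - 2*S/R*(h*R/T*lamv)*((X + h*S/T)*lamv)
      = (c*lamv)^2 := by
  field_simp
  linear_combination (-(lamv^2*h^2)) * h2 + (lamv^2*T^2) * hXhc

lemma key2 (R S T Y h e lamv : ℚ) (hR : R ≠ 0) (hT : T ≠ 0) (h2 : S^2 + T^2 = R^2)
    (hYhe : Y^2 + h^2 = e^2) :
    (h*R/T*lamv)^2 + ((Y - h*S/T)*lamv)^2 + 2*S/R*(h*R/T*lamv)*((Y - h*S/T)*lamv)
      = (e*lamv)^2 := by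
  field_simp
  linear_combination (-(lamv^2*h^2)) * h2 + (lamv^2*T^2) * hYhe

theorem env_isEnvelope (r s : ℤ) (t n : ℕ) (hs : 0 ≤ s) (hsr : s < r) (ht : 0 < t) (hn : 0 < n)
    (hpyth : r ^ 2 - s ^ 2 = (t : ℤ) ^ 2) (lam : ℚ) (hl : 0 < lam)
    (hxN : lam ^ 2 < (t : ℚ) * n)
    (hdel : ((t:ℚ)*n - lam^2) * ((t:ℚ) + 2*(s:ℚ) + 2) < ((t:ℚ)*n) * (t:ℚ)) :
    IsEnvelope r s n (env r s t n lam).1 (env r s t n lam).2.1 (env r s t n lam).2.2.1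
      (env r s t n lam).2.2.2.1 (env r s t n lam).2.2.2.2 := by
  have hR : (0:ℚ) < (r:ℚ) := by exact_mod_cast lt_of_le_of_lt hs hsr
  have hS : (0:ℚ) ≤ (s:ℚ) := by exact_mod_cast hs
  have hT : (0:ℚ) < (t:ℚ) := by exact_mod_cast ht
  have hN : (0:ℚ) < (t:ℚ)*n := by
    have : (0:ℚ) < (n:ℚ) := by exact_mod_cast hn
    positivity
  have hx : (0:ℚ) < lam^2 := by positivity
  have hDpos : (0:ℚ) < lam^2 + (t:ℚ)*n := by positivity
  have hFpos : (0:ℚ) < (t:ℚ)*n - lam^2 := by linarith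
  have hWpos : (0:ℚ) < 5*lam^4 + 2*((t:ℚ)*n)*lam^2 + ((t:ℚ)*n)^2 := by positivity
  have hR2 : (s:ℚ)^2 + (t:ℚ)^2 = (r:ℚ)^2 := by
    have h' : (r:ℚ)^2 - (s:ℚ)^2 = (t:ℚ)^2 := by exact_mod_cast hpyth
    linarith
  have hHpos : 0 < eH t n lam := by unfold eH; positivity
  have hXpos : 0 < eX t n lam := by unfold eX; positivity
  have hEpos : 0 < eE t n lam := by unfold eE; positivity
  have hFD : ((t:ℚ)*n - lam^2) < (lam^2 + (t:ℚ)*n) := by linarith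
  have h4 : ((t:ℚ)*n - lam^2)^4 < (lam^2 + (t:ℚ)*n)^4 :=
    pow_lt_pow_left₀ hFD (le_of_lt hFpos) (by norm_num)
  have hYpos : 0 < eY t n lam := by
    unfold eY
    apply div_pos
    · nlinarith [pow_pos hDpos 4]
    · positivity
  -- key quantitative fact for positivity of d
  have hkey : 2*(s:ℚ)*((t:ℚ)*n - lam^2)^2 < ((t:ℚ)*n)^2*(t:ℚ) := by
    rcases eq_or_lt_of_le hS with h0 | hSpos
    · rw [← h0]; nlinarith
    · nlinarith [mul_pos hFpos (by positivity : (0:ℚ) < (t:ℚ) + 2*(s:ℚ) + 2), hdel,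
        mul_pos hN hT, sq_nonneg ((t:ℚ) + 2*(s:ℚ) + 2), mul_pos hSpos hT,
        mul_lt_mul_of_pos_left hdel (mul_pos (mul_pos (by norm_num : (0:ℚ)<2) hSpos) hFpos)]
  have hdpos : 0 < eY t n lam - eH t n lam * (s:ℚ) / (t:ℚ) := by
    have hsub : eY t n lam - eH t n lam * (s:ℚ) / (t:ℚ)
        = ((4*(lam^2 + (t:ℚ)*n)^4 - ((t:ℚ)*n - lam^2)^4)*(t:ℚ)
            - 4*(lam^2 + (t:ℚ)*n)^2*((t:ℚ)*n - lam^2)^2*(s:ℚ))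
          / (2*(lam^2 + (t:ℚ)*n)*((t:ℚ)*n - lam^2)
              *(5*lam^4 + 2*((t:ℚ)*n)*lam^2 + ((t:ℚ)*n)^2)*(t:ℚ)) := by
      unfold eY eH
      field_simp
      ring
    rw [hsub]
    apply div_pos
    · have g1 : ((t:ℚ)*n)^2 ≤ 2*(lam^2 + (t:ℚ)*n)^2 - ((t:ℚ)*n - lam^2)^2 := by nlinarith
      have g2 : 2*(lam^2 + (t:ℚ)*n)^2 ≤ 2*(lam^2 + (t:ℚ)*n)^2 + ((t:ℚ)*n - lam^2)^2 := by
        nlinarith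
      nlinarith [mul_lt_mul_of_pos_left hkey (by positivity : (0:ℚ) < 2*(lam^2 + (t:ℚ)*n)^2),
        mul_le_mul g1 g2 (by positivity) (by nlinarith),
        mul_pos hDpos hFpos, sq_nonneg ((t:ℚ)*n - lam^2), hT]
    · positivity
  -- the three identities of rational functions
  have id1 : (eX t n lam)^2 + (eH t n lam)^2 = (((t:ℚ)*n - lam^2) / (2*lam^2))^2 := by
    unfold eX eH
    field_simp
    ring
  have id2 : (eY t n lam)^2 + (eH t n lam)^2 = (eE t n lam)^2 := by
    unfold eY eH eE
    field_simp
    ring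
  have id3 : eH t n lam * (eX t n lam + eY t n lam) * lam^2 = (t:ℚ)*n := by
    unfold eY eH eX
    field_simp
    ring
  refine ⟨?_, ?_, ?_, ?_, ?_, ?_, ?_, ?_⟩
  · show 0 < eH t n lam * (r:ℚ) / (t:ℚ) * lam
    positivity
  · show 0 < (eX t n lam + eH t n lam * (s:ℚ) / (t:ℚ)) * lam
    have : 0 ≤ eH t n lam * (s:ℚ) / (t:ℚ) := by positivity
    nlinarith
  · show 0 < (((t:ℚ)*n - lam^2) / (2*lam^2)) * lam
    positivity
  · show 0 < (eY t n lam - eH t n lam * (s:ℚ) / (t:ℚ)) * lam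
    exact mul_pos hdpos hl
  · show 0 < eE t n lam * lam
    positivity
  · exact key1 (r:ℚ) (s:ℚ) (t:ℚ) (eX t n lam) (eH t n lam)
      (((t:ℚ)*n - lam^2) / (2*lam^2)) lam (ne_of_gt hR) (ne_of_gt hT) hR2 id1
  · exact key2 (r:ℚ) (s:ℚ) (t:ℚ) (eY t n lam) (eH t n lam) (eE t n lam) lam
      (ne_of_gt hR) (ne_of_gt hT) hR2 id2
  · show (eH t n lam * (r:ℚ) / (t:ℚ) * lam) *
        ((eX t n lam + eH t n lam * (s:ℚ) / (t:ℚ)) * lam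
          + (eY t n lam - eH t n lam * (s:ℚ) / (t:ℚ)) * lam) = (r:ℚ) * (n:ℚ)
    have step : (eH t n lam * (r:ℚ) / (t:ℚ) * lam) *
        ((eX t n lam + eH t n lam * (s:ℚ) / (t:ℚ)) * lam
          + (eY t n lam - eH t n lam * (s:ℚ) / (t:ℚ)) * lam)
        = ((r:ℚ)/(t:ℚ)) * (eH t n lam * (eX t n lam + eY t n lam) * lam^2) := by
      ring
    rw [step, id3]
    field_simp

lemma env3 (r s : ℤ) (t n : ℕ) (lam : ℚ) :
    (env r s t n lam).2.2.1 = (((t:ℚ)*n - lam^2) / (2*lam^2)) * lam := rfl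

theorem stmt_16 (r s : ℤ) (hrs : IsCoprime r s) (hs : 0 ≤ s) (hsr : s < r)
    (t : ℕ) (ht : 0 < t) (hpyth : r ^ 2 - s ^ 2 = (t : ℤ) ^ 2) :
    ∀ n : ℕ, 0 < n →
      {x : ℚ × ℚ × ℚ × ℚ × ℚ |
        IsEnvelope r s n x.1 x.2.1 x.2.2.1 x.2.2.2.1 x.2.2.2.2}.Infinite := by
  intro n hn
  have hT : (0:ℚ) < (t:ℚ) := by exact_mod_cast ht
  have hS : (0:ℚ) ≤ (s:ℚ) := by exact_mod_cast hs
  have hN : (0:ℚ) < (t:ℚ)*n := by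
    have : (0:ℚ) < (n:ℚ) := by exact_mod_cast hn
    positivity
  set NQ : ℚ := (t:ℚ)*n with hNQ
  set K : ℚ := (t:ℚ) + 2*(s:ℚ) + 2 with hKdef
  have hK : 0 < K := by positivity
  set δ : ℚ := NQ*(t:ℚ)/K with hδdef
  have hδ : 0 < δ := by positivity
  have hδN : δ < NQ := by
    rw [hδdef, div_lt_iff₀ hK]
    nlinarith
  -- the intervals
  have hAposR : ∀ j : ℕ, (0:ℚ) < NQ - δ/(j+1) := by
    intro j
    have h1 : δ/((j:ℚ)+1) ≤ δ := by
      apply div_le_self hδ.le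
      have : (0:ℚ) ≤ (j:ℚ) := by positivity
      linarith
    linarith
  have hAB : ∀ j : ℕ, NQ - δ/(j+1) < NQ - δ/(j+2) := by
    intro j
    have : δ/((j:ℚ)+2) < δ/((j:ℚ)+1) := by
      apply div_lt_div_of_pos_left hδ (by positivity)
      linarith
    linarith
  have hBN : ∀ j : ℕ, NQ - δ/(j+2) < NQ := by
    intro j
    have : 0 < δ/((j:ℚ)+2) := by positivity
    linarith
  -- choose rationals between consecutive square roots
  have hex : ∀ j : ℕ, ∃ q : ℚ,
      Real.sqrt ((NQ - δ/(j+1) : ℚ) : ℝ) < (q:ℝ) ∧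
      (q:ℝ) < Real.sqrt ((NQ - δ/(j+2) : ℚ) : ℝ) := by
    intro j
    apply exists_rat_btwn
    apply Real.sqrt_lt_sqrt
    · exact_mod_cast (hAposR j).le
    · exact_mod_cast hAB j
  choose f hf1 hf2 using hex
  have hfpos : ∀ j : ℕ, 0 < f j := by
    intro j
    have h0 : (0:ℝ) < Real.sqrt ((NQ - δ/(j+1) : ℚ) : ℝ) := by
      apply Real.sqrt_pos.mpr
      exact_mod_cast hAposR j
    have : (0:ℝ) < (f j : ℝ) := lt_trans h0 (hf1 j)
    exact_mod_cast this
  have hflo : ∀ j : ℕ, NQ - δ/(j+1) < (f j)^2 := by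
    intro j
    have h0 : (0:ℝ) ≤ Real.sqrt ((NQ - δ/(j+1) : ℚ) : ℝ) := Real.sqrt_nonneg _
    have h1 : (Real.sqrt ((NQ - δ/(j+1) : ℚ) : ℝ))^2 < ((f j : ℝ))^2 :=
      pow_lt_pow_left₀ (hf1 j) h0 (by norm_num)
    rw [Real.sq_sqrt (by exact_mod_cast (hAposR j).le)] at h1
    exact_mod_cast h1
  have hfhi : ∀ j : ℕ, (f j)^2 < NQ - δ/(j+2) := by
    intro j
    have hfj0 : (0:ℝ) ≤ (f j : ℝ) := by exact_mod_cast (hfpos j).le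
    have h1 : ((f j : ℝ))^2 < (Real.sqrt ((NQ - δ/(j+2) : ℚ) : ℝ))^2 :=
      pow_lt_pow_left₀ (hf2 j) hfj0 (by norm_num)
    have hBpos : (0:ℚ) ≤ NQ - δ/(j+2) := le_of_lt (lt_trans (hAposR j) (hAB j))
    rw [Real.sq_sqrt (by exact_mod_cast hBpos)] at h1
    exact_mod_cast h1
  -- monotonicity of squares
  have hmono : ∀ j k : ℕ, j < k → (f j)^2 < (f k)^2 := by
    intro j k hjk
    have h1 : (f j)^2 < NQ - δ/(j+2) := hfhi j
    have h2 : NQ - δ/(k+1) < (f k)^2 := hflo k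
    have h3 : NQ - δ/(j+2) ≤ NQ - δ/(k+1) := by
      have hle : ((j:ℚ)+2) ≤ ((k:ℚ)+1) := by
        have : (j:ℚ) + 1 ≤ (k:ℚ) := by exact_mod_cast hjk
        linarith
      have : δ/((k:ℚ)+1) ≤ δ/((j:ℚ)+2) :=
        div_le_div_of_nonneg_left hδ.le (by positivity) hle
      linarith
    linarith
  -- constraints
  have hxNj : ∀ j : ℕ, (f j)^2 < NQ := fun j => lt_trans (hfhi j) (hBN j)
  have hdelj : ∀ j : ℕ, (NQ - (f j)^2) * K < NQ * (t:ℚ) := by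
    intro j
    have h1 : NQ - (f j)^2 < δ/(j+1) := by linarith [hflo j]
    have h2 : δ/((j:ℚ)+1) ≤ δ := by
      apply div_le_self hδ.le
      have : (0:ℚ) ≤ (j:ℚ) := by positivity
      linarith
    have h3 : NQ - (f j)^2 < δ := lt_of_lt_of_le h1 h2
    calc (NQ - (f j)^2) * K < δ * K := by
          exact mul_lt_mul_of_pos_right h3 hK
      _ = NQ * (t:ℚ) := by
          rw [hδdef]; field_simp
  -- injectivity
  have hinj : Function.Injective (fun j => env r s t n (f j)) := by
    intro j k h
    have h3 : (env r s t n (f j)).2.2.1 = (env r s t n (f k)).2.2.1 :=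
      congrArg (fun p : ℚ × ℚ × ℚ × ℚ × ℚ => p.2.2.1) h
    rw [env3, env3] at h3
    have hj0 : f j ≠ 0 := ne_of_gt (hfpos j)
    have hk0 : f k ≠ 0 := ne_of_gt (hfpos k)
    field_simp at h3
    have hfac : (f k - f j) * (((t:ℚ)*n + f j * f k) * (2 * f j * f k)) = 0 := by
      linear_combination (2 * f j * f k) * h3
    have hpos : 0 < ((t:ℚ)*n + f j * f k) * (2 * f j * f k) := by
      have h1 := mul_pos (hfpos j) (hfpos k)
      have h2 : (0:ℚ) < (t:ℚ)*n + f j * f k := by rw [← hNQ]; linarith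
      have h3' : (0:ℚ) < 2 * f j * f k := by nlinarith
      nlinarith
    have hfjk : f j = f k := by
      rcases mul_eq_zero.mp hfac with h' | h'
      · linarith
      · linarith
    by_contra hne
    rcases lt_trichotomy j k with hlt | heq | hlt
    · have := hmono j k hlt; rw [hfjk] at this; linarith
    · exact hne heq
    · have := hmono k j hlt; rw [hfjk] at this; linarith
  apply Set.infinite_of_injective_forall_mem hinj
  intro j
  simp only [Set.mem_setOf_eq]
  exact env_isEnvelope r s t n hs hsr ht hn hpyth (f j) (hfpos j) (hxNj j) (hdelj j)
end

section
/- Let r, s be coprime integers with 0 ≤ s < r and suppose θ is a Pythagorean angle, i.e., r² − s² = t² for some positive integer t. Then for every positive integer n, the set of rational numbers m ≥ 1 such that n ∈ N_{θ,m} (i.e., n admits a θ-parallelogram envelope with ratio m) is infinite. -/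
set_option maxHeartbeats 1000000 in
theorem stmt_17 (r s : ℤ) (hrs : IsCoprime r s) (hs : 0 ≤ s) (hsr : s < r)
    (t : ℕ) (ht : 0 < t) (hpyth : r ^ 2 - s ^ 2 = (t : ℤ) ^ 2) :
    ∀ n : ℕ, 0 < n →
      {m : ℚ | 1 ≤ m ∧ ∃ a b c d e : ℚ, IsEnvelope r s n a b c d e ∧ d = m * b}.Infinite := by
  intro n hn
  set S := {m : ℚ | 1 ≤ m ∧ ∃ a b c d e : ℚ, IsEnvelope r s n a b c d e ∧ d = m * b} with hSdef
  -- basic integer facts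
  have hr1Z : (1 : ℤ) ≤ r := by omega
  have htsZ : 2 * s + 1 ≤ (t : ℤ) ^ 2 := by nlinarith [hpyth, hsr, hs]
  -- rational casts
  have hn1 : (1 : ℚ) ≤ (n : ℚ) := by exact_mod_cast hn
  have ht1 : (1 : ℚ) ≤ (t : ℚ) := by exact_mod_cast ht
  have hs0 : (0 : ℚ) ≤ (s : ℚ) := by exact_mod_cast hs
  have hr1 : (1 : ℚ) ≤ (r : ℚ) := by exact_mod_cast hr1Z
  have hpq : (r : ℚ) ^ 2 - (s : ℚ) ^ 2 = (t : ℚ) ^ 2 := by exact_mod_cast hpyth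
  have htsq : 2 * (s : ℚ) + 1 ≤ (t : ℚ) ^ 2 := by exact_mod_cast htsZ
  have hr0' : (0 : ℚ) < (r : ℚ) := by linarith
  have hr0 : (r : ℚ) ≠ 0 := ne_of_gt hr0'
  have ht0' : (0 : ℚ) < (t : ℚ) := by linarith
  have ht0 : (t : ℚ) ≠ 0 := ne_of_gt ht0'
  have htt : (t : ℚ) ≤ (t : ℚ) ^ 2 := by nlinarith
  -- key claim: arbitrarily large members
  have key : ∀ C : ℚ, ∃ m : ℚ, m ∈ S ∧ C < m := by
    intro C
    obtain ⟨C0, hC0def⟩ : ∃ x : ℚ, x = max C 0 := ⟨_, rfl⟩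
    have hC0 : 0 ≤ C0 := by rw [hC0def]; exact le_max_right C 0
    have hCC0 : C ≤ C0 := by rw [hC0def]; exact le_max_left C 0
    obtain ⟨j, hjC'⟩ := exists_nat_gt (8 * C0 + 5)
    obtain ⟨jq, hjq⟩ : ∃ x : ℚ, x = (j : ℚ) := ⟨_, rfl⟩
    have hjC : 8 * C0 + 5 < jq := by rw [hjq]; exact hjC'
    have hj5 : (5 : ℚ) ≤ jq := by linarith
    have hj0 : (0 : ℚ) < jq := by linarith
    have hjn : jq ≠ 0 := ne_of_gt hj0
    obtain ⟨N, hNdef⟩ : ∃ x : ℚ, x = (n : ℚ) * (t : ℚ) * jq ^ 2 := ⟨_, rfl⟩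
    have hj25 : (25 : ℚ) ≤ jq ^ 2 := by nlinarith
    have hNtj : (t : ℚ) * jq ^ 2 ≤ N := by
      rw [hNdef]
      nlinarith [mul_nonneg (mul_nonneg (by linarith : (0:ℚ) ≤ (n:ℚ) - 1) ht0'.le) (sq_nonneg jq)]
    have hN25t : 25 * (t : ℚ) ≤ N := by
      have h1 : 25 * (t : ℚ) ≤ (t : ℚ) * jq ^ 2 := by
        have := mul_le_mul_of_nonneg_left hj25 ht0'.le
        linarith
      linarith
    have hN25 : (25 : ℚ) ≤ N := by linarith
    have hN0 : (0 : ℚ) < N := by linarith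
    have hNne : N ≠ 0 := ne_of_gt hN0
    have hNm1 : (0 : ℚ) < N - 1 := by linarith
    have hNm1n : N - 1 ≠ 0 := ne_of_gt hNm1
    have hNp1 : (0 : ℚ) < N + 1 := by linarith
    have hNp1n : N + 1 ≠ 0 := ne_of_gt hNp1
    have hN21 : (0 : ℚ) < N ^ 2 - 1 := by nlinarith [sq_nonneg (N - 25)]
    have hA1 : (0 : ℚ) < N ^ 2 + 2 * N + 5 := by nlinarith [sq_nonneg (N + 1)]
    have hA1n : N ^ 2 + 2 * N + 5 ≠ 0 := ne_of_gt hA1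
    have hD2 : (0 : ℚ) < 4 * (N + 1) ^ 2 * (N - 1) ^ 2 :=
      mul_pos (mul_pos (by norm_num) (pow_pos hNp1 2)) (pow_pos hNm1 2)
    have hD2n : (4 : ℚ) * (N + 1) ^ 2 * (N - 1) ^ 2 ≠ 0 := ne_of_gt hD2
    have h4Np1 : (0 : ℚ) < 4 * (N + 1) := by linarith
    have h4Np1n : (4 : ℚ) * (N + 1) ≠ 0 := ne_of_gt h4Np1
    obtain ⟨β, hβ⟩ : ∃ x : ℚ, x = (N - 1) * (N + 3) / (4 * (N + 1)) := ⟨_, rfl⟩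
    obtain ⟨sqβ, hsqβ⟩ : ∃ x : ℚ, x = (N ^ 2 + 2 * N + 5) / (4 * (N + 1)) := ⟨_, rfl⟩
    obtain ⟨α, hα⟩ : ∃ x : ℚ, x = (3 * N ^ 2 + 2 * N + 3) * (N ^ 2 + 6 * N + 1) / (4 * (N + 1) ^ 2 * (N - 1) ^ 2) := ⟨_, rfl⟩
    obtain ⟨sqα, hsqα⟩ : ∃ x : ℚ, x = (N ^ 2 + 2 * N + 5) * (5 * N ^ 2 + 2 * N + 1) / (4 * (N + 1) ^ 2 * (N - 1) ^ 2) := ⟨_, rfl⟩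
    obtain ⟨k, hk⟩ : ∃ x : ℚ, x = 2 * (N ^ 2 - 1) / ((t : ℚ) * jq * (N ^ 2 + 2 * N + 5)) := ⟨_, rfl⟩
    -- square identities
    have hβsq : β ^ 2 + 1 = sqβ ^ 2 := by
      rw [hβ, hsqβ]
      field_simp
      ring
    have hαsq : α ^ 2 + 1 = sqα ^ 2 := by
      rw [hα, hsqα]
      field_simp
      ring
    have hAB : α + β = N * (N ^ 2 + 2 * N + 5) ^ 2 / (4 * (N + 1) ^ 2 * (N - 1) ^ 2) := by
      rw [hα, hβ]
      field_simp
      ring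
    -- area identity
    have hk2a : k ^ 2 * (t : ℚ) * (α + β) = N / ((t : ℚ) * jq ^ 2) := by
      rw [hAB, hk]
      field_simp
      ring
    have hk2 : k ^ 2 * (t : ℚ) * (α + β) = (n : ℚ) := by
      rw [hk2a, hNdef]
      field_simp
    -- positivity
    have hkpos : 0 < k := by
      rw [hk]
      exact div_pos (by linarith) (mul_pos (mul_pos ht0' hj0) hA1)
    have hαpos : 0 < α := by
      rw [hα]
      refine div_pos (mul_pos ?_ ?_) hD2
      · nlinarith only [sq_nonneg N, hN0]
      · nlinarith only [sq_nonneg N, hN0]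
    have hsqαpos : 0 < sqα := by
      rw [hsqα]
      refine div_pos (mul_pos hA1 ?_) hD2
      nlinarith only [sq_nonneg N, hN0]
    have hsqβpos : 0 < sqβ := by
      rw [hsqβ]
      exact div_pos hA1 h4Np1
    have hαle : α ≤ 1 := by
      rw [hα, div_le_one hD2]
      have e1 : 4 * (N + 1) ^ 2 * (N - 1) ^ 2 - (3 * N ^ 2 + 2 * N + 3) * (N ^ 2 + 6 * N + 1)
          = N ^ 3 * (N - 25) + 5 * N ^ 2 * (N - 25) + (99 * N ^ 2 - 20 * N + 1) := by ring
      have p1 : 0 ≤ N ^ 3 * (N - 25) := mul_nonneg (by positivity) (by linarith only [hN25])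
      have p2 : 0 ≤ 5 * N ^ 2 * (N - 25) := mul_nonneg (by positivity) (by linarith only [hN25])
      have p3 : 0 ≤ 99 * N ^ 2 - 20 * N + 1 := by
        nlinarith only [mul_nonneg hN0.le (by linarith only [hN25] : (0:ℚ) ≤ N - 25), hN25, hN0]
      linarith only [e1, p1, p2, p3]
    have hβlb : (N - 1) / 4 ≤ β := by
      rw [hβ, div_le_div_iff₀ (by norm_num) h4Np1]
      nlinarith only [hNm1]
    obtain ⟨B1, hB1⟩ : ∃ x : ℚ, x = (t : ℚ) * α + (s : ℚ) := ⟨_, rfl⟩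
    obtain ⟨B2, hB2⟩ : ∃ x : ℚ, x = (t : ℚ) * β - (s : ℚ) := ⟨_, rfl⟩
    have hB1pos : 0 < B1 := by
      rw [hB1]
      have h1 := mul_pos ht0' hαpos
      linarith only [h1, hs0]
    have hB1n : B1 ≠ 0 := ne_of_gt hB1pos
    have hB1ub : B1 ≤ 2 * (t : ℚ) ^ 2 := by
      rw [hB1]
      have h1 := mul_le_mul_of_nonneg_left hαle ht0'.le
      linarith only [htsq, htt, h1]
    have hB2lb : (t : ℚ) * ((N - 1) / 4) - (s : ℚ) ≤ B2 := by
      rw [hB2]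
      have h1 := mul_le_mul_of_nonneg_left hβlb ht0'.le
      linarith only [h1]
    have htN : (t : ℚ) ^ 2 * jq ^ 2 ≤ (t : ℚ) * N := by
      linarith only [mul_le_mul_of_nonneg_left hNtj ht0'.le]
    have hB2a : 2 * (t : ℚ) ^ 2 ≤ B2 := by
      have h1 := mul_le_mul_of_nonneg_left hN25t ht0'.le
      linarith only [hB2lb, htsq, htt, h1]
    have hjq2 : (40 * C0 + 25) < jq ^ 2 := by
      nlinarith only [hjC, hC0, mul_nonneg (by linarith only [hj5] : (0:ℚ) ≤ jq - 5) (by linarith only [hj0] : (0:ℚ) ≤ jq)]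
    have hB2b : 2 * (t : ℚ) ^ 2 * C0 < B2 := by
      have h1 : (t : ℚ) ^ 2 * (40 * C0 + 25) < (t : ℚ) ^ 2 * jq ^ 2 :=
        mul_lt_mul_of_pos_left hjq2 (by positivity)
      linarith only [hB2lb, htsq, htt, htN, h1, mul_nonneg hC0 (sq_nonneg (t : ℚ))]
    obtain ⟨m, hm⟩ : ∃ x : ℚ, x = B2 / B1 := ⟨_, rfl⟩
    have hm1 : 1 ≤ m := by
      rw [hm, le_div_iff₀ hB1pos]
      linarith only [hB1ub, hB2a]
    have hmC : C < m := by
      have h1 : C0 < m := by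
        rw [hm, lt_div_iff₀ hB1pos]
        linarith only [mul_le_mul_of_nonneg_left hB1ub hC0, hB2b]
      linarith only [h1, hCC0]
    -- envelope data
    obtain ⟨a, haa⟩ : ∃ x : ℚ, x = (r : ℚ) * k := ⟨_, rfl⟩
    obtain ⟨b, hbb⟩ : ∃ x : ℚ, x = k * B1 := ⟨_, rfl⟩
    obtain ⟨d, hdd⟩ : ∃ x : ℚ, x = k * B2 := ⟨_, rfl⟩
    obtain ⟨c, hcc⟩ : ∃ x : ℚ, x = (t : ℚ) * k * sqα := ⟨_, rfl⟩
    obtain ⟨e, hee⟩ : ∃ x : ℚ, x = (t : ℚ) * k * sqβ := ⟨_, rfl⟩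
    have hapos : 0 < a := by rw [haa]; exact mul_pos hr0' hkpos
    have hbpos : 0 < b := by rw [hbb]; exact mul_pos hkpos hB1pos
    have hdpos : 0 < d := by
      rw [hdd]
      have h2 : (0:ℚ) < 2 * (t : ℚ) ^ 2 := by positivity
      exact mul_pos hkpos (by linarith only [hB2a, h2])
    have hcpos : 0 < c := by rw [hcc]; exact mul_pos (mul_pos ht0' hkpos) hsqαpos
    have hepos : 0 < e := by rw [hee]; exact mul_pos (mul_pos ht0' hkpos) hsqβpos
    have hfrac1 : (2 * (s : ℚ) / (r : ℚ)) * ((r : ℚ) * k) * (k * B1) = 2 * (s : ℚ) * k ^ 2 * B1 := by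
      field_simp
    have hfrac2 : (2 * (s : ℚ) / (r : ℚ)) * ((r : ℚ) * k) * (k * B2) = 2 * (s : ℚ) * k ^ 2 * B2 := by
      field_simp
    have heq1 : a ^ 2 + b ^ 2 - (2 * (s : ℚ) / (r : ℚ)) * a * b = c ^ 2 := by
      rw [haa, hbb, hcc, hfrac1, hB1]
      linear_combination k ^ 2 * hpq + k ^ 2 * (t : ℚ) ^ 2 * hαsq
    have heq2 : a ^ 2 + d ^ 2 + (2 * (s : ℚ) / (r : ℚ)) * a * d = e ^ 2 := by
      rw [haa, hdd, hee, hfrac2, hB2]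
      linear_combination k ^ 2 * hpq + k ^ 2 * (t : ℚ) ^ 2 * hβsq
    have heq3 : a * (b + d) = (r : ℚ) * (n : ℚ) := by
      have h : a * (b + d) = (r : ℚ) * (k ^ 2 * (t : ℚ) * (α + β)) := by
        rw [haa, hbb, hdd, hB1, hB2]; ring
      rw [h, hk2]
    have hdmb : d = m * b := by
      rw [hdd, hbb, hm]
      field_simp
    have hEnv : IsEnvelope r s n a b c d e :=
      ⟨hapos, hbpos, hcpos, hdpos, hepos, heq1, heq2, heq3⟩
    exact ⟨m, ⟨hm1, a, b, c, d, e, hEnv, hdmb⟩, hmC⟩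
  -- conclude infinitude
  by_contra hinf
  rw [Set.not_infinite] at hinf
  obtain ⟨C, hC⟩ := hinf.bddAbove
  obtain ⟨m, hmS, hCm⟩ := key C
  exact absurd (hC hmS) (not_le.2 hCm)
end

section
/- Let r, s be coprime integers with 0 ≤ s < r, let n be a positive integer, and let c, e, f be positive rational numbers satisfying the Heron relation 64n²(r²−s²) = (c+e+f)(c+e−f)(e+f−c)(c−e+f) (so that (c, e, f) are the sides of a rational triangle of area 2n√(r²−s²)). Define a = 4rn/f, b = (f² + c² − e²)/(2f) + (s/r)a, and d = (f² + e² − c²)/(2f) − (s/r)a. Then a² + b² − (2s/r)ab = c², a² + d² + (2s/r)ad = e², and a(b+d) = 4rn; in particular, if a, b, d are positive, then (a/2, b/2, c/2, d/2, e/2) is a θ-parallelogram envelope for n. -/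
theorem stmt_18 (r s : ℤ) (hrs : IsCoprime r s) (hs : 0 ≤ s) (hsr : s < r)
    (n : ℕ) (hn : 0 < n) (c e f : ℚ) (hc : 0 < c) (he : 0 < e) (hf : 0 < f)
    (heron : 64 * (n : ℚ) ^ 2 * ((r : ℚ) ^ 2 - (s : ℚ) ^ 2) =
      (c + e + f) * (c + e - f) * (e + f - c) * (c - e + f))
    (a b d : ℚ)
    (ha : a = 4 * (r : ℚ) * (n : ℚ) / f)
    (hb : b = (f ^ 2 + c ^ 2 - e ^ 2) / (2 * f) + ((s : ℚ) / (r : ℚ)) * a)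
    (hd : d = (f ^ 2 + e ^ 2 - c ^ 2) / (2 * f) - ((s : ℚ) / (r : ℚ)) * a) :
    a ^ 2 + b ^ 2 - (2 * (s : ℚ) / (r : ℚ)) * a * b = c ^ 2 ∧
    a ^ 2 + d ^ 2 + (2 * (s : ℚ) / (r : ℚ)) * a * d = e ^ 2 ∧
    a * (b + d) = 4 * (r : ℚ) * (n : ℚ) ∧
    (0 < a → 0 < b → 0 < d → IsEnvelope r s n (a / 2) (b / 2) (c / 2) (d / 2) (e / 2)) := by
  have hr : (0:ℚ) < (r:ℚ) := by
    have : (0:ℤ) < r := lt_of_le_of_lt hs hsr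
    exact_mod_cast this
  have hr0 : (r:ℚ) ≠ 0 := ne_of_gt hr
  have hf0 : f ≠ 0 := ne_of_gt hf
  subst ha hb hd
  have h1 : (4 * (r:ℚ) * n / f) ^ 2 +
      ((f ^ 2 + c ^ 2 - e ^ 2) / (2 * f) + (s:ℚ) / r * (4 * r * n / f)) ^ 2 -
      2 * (s:ℚ) / r * (4 * r * n / f) *
        ((f ^ 2 + c ^ 2 - e ^ 2) / (2 * f) + (s:ℚ) / r * (4 * r * n / f)) = c ^ 2 := by
    field_simp
    linear_combination heron
  have h2 : (4 * (r:ℚ) * n / f) ^ 2 +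
      ((f ^ 2 + e ^ 2 - c ^ 2) / (2 * f) - (s:ℚ) / r * (4 * r * n / f)) ^ 2 +
      2 * (s:ℚ) / r * (4 * r * n / f) *
        ((f ^ 2 + e ^ 2 - c ^ 2) / (2 * f) - (s:ℚ) / r * (4 * r * n / f)) = e ^ 2 := by
    field_simp
    linear_combination heron
  have h3 : (4 * (r:ℚ) * n / f) *
      (((f ^ 2 + c ^ 2 - e ^ 2) / (2 * f) + (s:ℚ) / r * (4 * r * n / f)) +
       ((f ^ 2 + e ^ 2 - c ^ 2) / (2 * f) - (s:ℚ) / r * (4 * r * n / f))) = 4 * r * n := by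
    field_simp
    ring
  refine ⟨h1, h2, h3, fun hpa hpb hpd => ?_⟩
  refine ⟨by linarith, by linarith, by linarith, by linarith, by linarith, ?_, ?_, ?_⟩
  · linear_combination h1 / 4
  · linear_combination h2 / 4
  · linear_combination h3 / 4
end
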